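/- arXiv:1706.08165 — 5 statements merged into one kernel-verified Lean document; each statement's English description precedes it below -/
import Mathlib

section
/- The group homomorphism \(\Phi : \mathbb{Z}^3 \to \mathbb{Z}_{20}\) defined by \(\Phi(e_1) = 2\), \(\Phi(e_2) = 5\), \(\Phi(e_3) = 6\) is surjective, and its restriction to the 20-element set \(V^* = \{v \in \mathbb{Z}^3 : d(v,V) \le 1\}\) (where \(V = \{(0,0,0),(1,0,0),(0,1,0),(1,1,0)\}\)) is a bijection onto \(\mathbb{Z}_{20}\). -/
def dist1 (u v : ℤ × ℤ × ℤ) : ℤ :=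
  |u.1 - v.1| + |u.2.1 - v.2.1| + |u.2.2 - v.2.2|

def Vsq : Set (ℤ × ℤ × ℤ) := {(0,0,0), (1,0,0), (0,1,0), (1,1,0)}

def Vstar : Set (ℤ × ℤ × ℤ) := {v | ∃ w ∈ Vsq, dist1 v w ≤ 1}

def Λ : SimpleGraph (ℤ × ℤ × ℤ) where
  Adj u v := dist1 u v = 1
  symm := by
    constructor
    intro u v h
    simpa [dist1, abs_sub_comm] using h
  loopless := by
    constructor
    intro u h
    simp [dist1] at h

def IsPDS (S : Set (ℤ × ℤ × ℤ)) : Prop :=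
  ∀ v ∉ S, ∃! w, w ∈ S ∧ dist1 v w = 1

def comp (S : Set (ℤ × ℤ × ℤ)) (v : ℤ × ℤ × ℤ) : Set (ℤ × ℤ × ℤ) :=
  {w | ∃ (hv : v ∈ S) (hw : w ∈ S), (Λ.induce S).Reachable ⟨v, hv⟩ ⟨w, hw⟩}

def AllComponentsFourCycles (S : Set (ℤ × ℤ × ℤ)) : Prop :=
  ∀ v ∈ S, (comp S v).ncard = 4 ∧
    ∀ w ∈ comp S v, {u ∈ comp S v | dist1 w u = 1}.ncard = 2


def VsqF : Finset (ℤ × ℤ × ℤ) := {(0,0,0), (1,0,0), (0,1,0), (1,1,0)}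

def myF : Finset (ℤ × ℤ × ℤ) :=
  {(0,0,0),(1,0,0),(0,1,0),(1,1,0),(-1,0,0),(0,-1,0),(0,0,-1),(0,0,1),(2,0,0),
   (1,-1,0),(1,0,-1),(1,0,1),(-1,1,0),(0,2,0),(0,1,-1),(0,1,1),(2,1,0),(1,2,0),
   (1,1,-1),(1,1,1)}

lemma VsqF_coe : (↑VsqF : Set (ℤ × ℤ × ℤ)) = Vsq := by
  simp [Vsq, VsqF]

lemma Vstar_eq : Vstar = ↑myF := by
  ext ⟨a, b, c⟩
  rw [Finset.mem_coe]
  constructor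
  · rintro ⟨⟨x, y, z⟩, hw, hd⟩
    simp only [Vsq, Set.mem_insert_iff, Set.mem_singleton_iff, Prod.mk.injEq] at hw
    simp only [dist1, Int.abs_eq_natAbs] at hd
    rcases hw with ⟨rfl, rfl, rfl⟩ | ⟨rfl, rfl, rfl⟩ | ⟨rfl, rfl, rfl⟩ | ⟨rfl, rfl, rfl⟩ <;>
    · have h1a : -1 ≤ a := by omega
      have h1b : a ≤ 2 := by omega
      have h2a : -1 ≤ b := by omega
      have h2b : b ≤ 2 := by omega
      have h3a : -1 ≤ c := by omega
      have h3b : c ≤ 1 := by omega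
      interval_cases a <;> interval_cases b <;> interval_cases c <;> revert hd <;> decide
  · intro h
    have key : ∀ v ∈ myF, ∃ w ∈ VsqF, dist1 v w ≤ 1 := by decide
    obtain ⟨w, hw, hd⟩ := key _ h
    exact ⟨w, VsqF_coe ▸ Finset.mem_coe.mpr hw, hd⟩

theorem stmt2 :
    Function.Surjective (fun v : ℤ × ℤ × ℤ => (2 * v.1 + 5 * v.2.1 + 6 * v.2.2 : ZMod 20)) ∧
    Set.BijOn (fun v : ℤ × ℤ × ℤ => (2 * v.1 + 5 * v.2.1 + 6 * v.2.2 : ZMod 20))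
      Vstar Set.univ := by
  set f := fun v : ℤ × ℤ × ℤ => (2 * v.1 + 5 * v.2.1 + 6 * v.2.2 : ZMod 20) with hf
  have himg : myF.image f = Finset.univ := by decide
  have hbij : Set.BijOn f Vstar Set.univ := by
    rw [Vstar_eq]
    refine ⟨fun x _ => trivial, ?_, ?_⟩
    · exact Finset.injOn_of_card_image_eq (by decide)
    · intro z _
      rw [Set.image_congr' (fun x => rfl), ← Finset.coe_image, himg]
      simp
  refine ⟨fun z => ?_, hbij⟩
  obtain ⟨v, _, hv⟩ := hbij.surjOn (Set.mem_univ z)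
  exact ⟨v, hv⟩
end

section
/- Let \(L \subset \mathbb{Z}^3\) be the lattice generated by \((1,0,3)\), \((0,2,5)\), \((0,0,10)\), and let \(V^* = \{v \in \mathbb{Z}^3 : d(v,V) \le 1\}\) where \(V = \{(0,0,0),(1,0,0),(0,1,0),(1,1,0)\}\) and \(d\) is the \(\ell_1\) distance. Then the translates \(V^* + z\) for \(z \in L\) partition \(\mathbb{Z}^3\): every point of \(\mathbb{Z}^3\) lies in exactly one translate \(V^* + z\). -/
/- Auxiliary machinery -/

/-- The linear functional whose kernel mod 20 is exactly the lattice. -/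
def g' (p : ℤ × ℤ × ℤ) : ℤ := 2*p.2.2 - 6*p.1 - 5*p.2.1

/-- The 20 points of `Vstar`, listed explicitly. -/
def pts : List (ℤ × ℤ × ℤ) :=
  [(0,0,0),(1,0,0),(0,1,0),(1,1,0),
   (-1,0,0),(2,0,0),(-1,1,0),(2,1,0),(0,-1,0),(1,-1,0),(0,2,0),(1,2,0),
   (0,0,1),(0,0,-1),(1,0,1),(1,0,-1),(0,1,1),(0,1,-1),(1,1,1),(1,1,-1)]

lemma memL_iff (p : ℤ × ℤ × ℤ) :
    p ∈ AddSubgroup.closure {((1:ℤ),(0:ℤ),(3:ℤ)), (0,2,5), (0,0,10)} ↔ (20:ℤ) ∣ g' p := by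
  constructor
  · intro hp
    induction hp using AddSubgroup.closure_induction with
    | mem x hx => rcases hx with rfl | rfl | rfl <;> decide
    | zero => decide
    | add x y _ _ hx hy => obtain ⟨a,b,c⟩ := x; obtain ⟨d,e,f⟩ := y; simp [g'] at *; omega
    | neg x _ hx => obtain ⟨a,b,c⟩ := x; simp [g'] at *; omega
  · rintro ⟨k, hk⟩
    obtain ⟨x,y,z⟩ := p
    simp [g'] at hk
    have h : (x, y, z) = x • ((1:ℤ),(0:ℤ),(3:ℤ)) + (y/2) • ((0:ℤ),(2:ℤ),(5:ℤ)) + k • ((0:ℤ),(0:ℤ),(10:ℤ)) := by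
      simp [Prod.smul_mk, smul_eq_mul, Prod.mk_add_mk, Prod.ext_iff]
      omega
    rw [h]
    refine add_mem (add_mem ?_ ?_) ?_ <;>
      exact AddSubgroup.zsmul_mem _ (AddSubgroup.subset_closure (by simp)) _

lemma dist1_cases {v w : ℤ × ℤ × ℤ} (h : dist1 v w ≤ 1) :
    v = w ∨ v = w + (1,0,0) ∨ v = w + (-1,0,0) ∨ v = w + (0,1,0) ∨
    v = w + (0,-1,0) ∨ v = w + (0,0,1) ∨ v = w + (0,0,-1) := by
  obtain ⟨a,b,c⟩ := v; obtain ⟨d,e,f⟩ := w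
  simp only [dist1, Prod.mk_add_mk, Prod.ext_iff] at *
  rcases abs_cases (a-d) with ⟨h1,_⟩|⟨h1,_⟩ <;>
  rcases abs_cases (b-e) with ⟨h2,_⟩|⟨h2,_⟩ <;>
  rcases abs_cases (c-f) with ⟨h3,_⟩|⟨h3,_⟩ <;>
  rw [h1, h2, h3] at h <;> omega

lemma vstar_cases {w : ℤ × ℤ × ℤ} (h : w ∈ Vstar) : w ∈ pts := by
  obtain ⟨u, hu, hd⟩ := h
  rcases hu with rfl | rfl | rfl | rfl <;>
    rcases dist1_cases hd with rfl|rfl|rfl|rfl|rfl|rfl|rfl <;> decide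

lemma pts_vstar {w : ℤ × ℤ × ℤ} (h : w ∈ pts) : w ∈ Vstar := by
  fin_cases h <;>
    first
      | exact ⟨(0,0,0), by simp [Vsq], by decide⟩
      | exact ⟨(1,0,0), by simp [Vsq], by decide⟩
      | exact ⟨(0,1,0), by simp [Vsq], by decide⟩
      | exact ⟨(1,1,0), by simp [Vsq], by decide⟩

lemma inj_pts : ∀ w1 ∈ pts, ∀ w2 ∈ pts, (g' w1 - g' w2) % 20 = 0 → w1 = w2 := by decide

lemma exists_rep (r : ℤ) (h0 : 0 ≤ r) (h1 : r < 20) : ∃ w ∈ pts, g' w % 20 = r := by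
  interval_cases r <;> decide

lemma g'_sub (p q : ℤ × ℤ × ℤ) : g' (p - q) = g' p - g' q := by
  obtain ⟨a,b,c⟩ := p; obtain ⟨d,e,f⟩ := q
  simp [g', Prod.mk_sub_mk]; ring

theorem stmt6 (v : ℤ × ℤ × ℤ) :
    ∃! z : ℤ × ℤ × ℤ,
      z ∈ AddSubgroup.closure {((1:ℤ),(0:ℤ),(3:ℤ)), (0,2,5), (0,0,10)} ∧ v - z ∈ Vstar := by
  obtain ⟨w, hwl, hwr⟩ := exists_rep (g' v % 20) (Int.emod_nonneg _ (by norm_num))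
    (Int.emod_lt_of_pos _ (by norm_num))
  refine ⟨v - w, ⟨?_, ?_⟩, ?_⟩
  · rw [memL_iff, g'_sub]
    omega
  · rw [sub_sub_cancel]
    exact pts_vstar hwl
  · rintro z' ⟨hz', hv'⟩
    obtain ⟨k, hk⟩ := (memL_iff z').mp hz'
    have h1 : v - z' ∈ pts := vstar_cases hv'
    have hsub : g' (v - z') = g' v - g' z' := g'_sub _ _
    have heq : v - z' = w := inj_pts _ h1 _ hwl (by omega)
    rw [← heq, sub_sub_cancel]
end

section
/- Define \(S = \{v \in \mathbb{Z}^3 : 2v_1 + 5v_2 + 6v_3 \equiv r \pmod{20} \text{ for some } r \in \{0, 2, 5, 7\}\}\). Then \(S\) is a perfect dominating set of the unit distance graph of \(\mathbb{Z}^3\): every vertex \(v \in \mathbb{Z}^3 \setminus S\) has exactly one neighbor (point at \(\ell_1\)-distance 1) in \(S\). -/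
def Tpred (r : ZMod 20) : Prop := r = 0 ∨ r = 2 ∨ r = 5 ∨ r = 7

def Sset : Set (ℤ × ℤ × ℤ) := {v : ℤ × ℤ × ℤ |
  (2 * v.1 + 5 * v.2.1 + 6 * v.2.2 : ZMod 20) ∈ ({0, 2, 5, 7} : Set (ZMod 20))}

lemma mem_Sset (p : ℤ × ℤ × ℤ) :
    p ∈ Sset ↔ Tpred (2 * (p.1 : ZMod 20) + 5 * p.2.1 + 6 * p.2.2) := by
  simp [Sset, Tpred, Set.mem_insert_iff]

lemma key : ∀ r : ZMod 20, ¬ Tpred r →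
    ((Tpred (r+2) ∧ ¬Tpred (r-2) ∧ ¬Tpred (r+5) ∧ ¬Tpred (r-5) ∧ ¬Tpred (r+6) ∧ ¬Tpred (r-6)) ∨
     (¬Tpred (r+2) ∧ Tpred (r-2) ∧ ¬Tpred (r+5) ∧ ¬Tpred (r-5) ∧ ¬Tpred (r+6) ∧ ¬Tpred (r-6)) ∨
     (¬Tpred (r+2) ∧ ¬Tpred (r-2) ∧ Tpred (r+5) ∧ ¬Tpred (r-5) ∧ ¬Tpred (r+6) ∧ ¬Tpred (r-6)) ∨
     (¬Tpred (r+2) ∧ ¬Tpred (r-2) ∧ ¬Tpred (r+5) ∧ Tpred (r-5) ∧ ¬Tpred (r+6) ∧ ¬Tpred (r-6)) ∨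
     (¬Tpred (r+2) ∧ ¬Tpred (r-2) ∧ ¬Tpred (r+5) ∧ ¬Tpred (r-5) ∧ Tpred (r+6) ∧ ¬Tpred (r-6)) ∨
     (¬Tpred (r+2) ∧ ¬Tpred (r-2) ∧ ¬Tpred (r+5) ∧ ¬Tpred (r-5) ∧ ¬Tpred (r+6) ∧ Tpred (r-6))) := by
  unfold Tpred
  set_option maxHeartbeats 1000000 in
  set_option synthInstance.maxSize 4000 in
  set_option synthInstance.maxHeartbeats 1000000 in
  decide

lemma dist1_eq_one_iff (v w : ℤ × ℤ × ℤ) : dist1 v w = 1 ↔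
    w = (v.1+1, v.2.1, v.2.2) ∨ w = (v.1-1, v.2.1, v.2.2) ∨
    w = (v.1, v.2.1+1, v.2.2) ∨ w = (v.1, v.2.1-1, v.2.2) ∨
    w = (v.1, v.2.1, v.2.2+1) ∨ w = (v.1, v.2.1, v.2.2-1) := by
  obtain ⟨a, b, c⟩ := v; obtain ⟨d, e, f⟩ := w
  simp only [dist1, Prod.mk.injEq]
  rcases abs_cases (a-d) with ⟨h1,_⟩|⟨h1,_⟩ <;> rcases abs_cases (b-e) with ⟨h2,_⟩|⟨h2,_⟩ <;>
    rcases abs_cases (c-f) with ⟨h3,_⟩|⟨h3,_⟩ <;> rw [h1,h2,h3] <;> omega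

set_option maxHeartbeats 1000000 in
theorem stmt7 :
    IsPDS {v : ℤ × ℤ × ℤ |
      (2 * v.1 + 5 * v.2.1 + 6 * v.2.2 : ZMod 20) ∈ ({0, 2, 5, 7} : Set (ZMod 20))} := by
  show IsPDS Sset
  rintro ⟨a, b, c⟩ hv
  set r : ZMod 20 := 2 * (a : ZMod 20) + 5 * b + 6 * c with hr
  have hT : ¬ Tpred r := by
    intro h; exact hv ((mem_Sset (a, b, c)).2 h)
  have m1 : ((a+1, b, c) : ℤ × ℤ × ℤ) ∈ Sset ↔ Tpred (r+2) := by
    rw [mem_Sset]; push_cast [hr]; ring_nf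
  have m2 : ((a-1, b, c) : ℤ × ℤ × ℤ) ∈ Sset ↔ Tpred (r-2) := by
    rw [mem_Sset]; push_cast [hr]; ring_nf
  have m3 : ((a, b+1, c) : ℤ × ℤ × ℤ) ∈ Sset ↔ Tpred (r+5) := by
    rw [mem_Sset]; push_cast [hr]; ring_nf
  have m4 : ((a, b-1, c) : ℤ × ℤ × ℤ) ∈ Sset ↔ Tpred (r-5) := by
    rw [mem_Sset]; push_cast [hr]; ring_nf
  have m5 : ((a, b, c+1) : ℤ × ℤ × ℤ) ∈ Sset ↔ Tpred (r+6) := by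
    rw [mem_Sset]; push_cast [hr]; ring_nf
  have m6 : ((a, b, c-1) : ℤ × ℤ × ℤ) ∈ Sset ↔ Tpred (r-6) := by
    rw [mem_Sset]; push_cast [hr]; ring_nf
  rcases key r hT with ⟨k1,k2,k3,k4,k5,k6⟩|⟨k1,k2,k3,k4,k5,k6⟩|⟨k1,k2,k3,k4,k5,k6⟩|
    ⟨k1,k2,k3,k4,k5,k6⟩|⟨k1,k2,k3,k4,k5,k6⟩|⟨k1,k2,k3,k4,k5,k6⟩
  · refine ⟨(a+1, b, c), ⟨m1.2 k1, (dist1_eq_one_iff _ _).2 (Or.inl rfl)⟩, ?_⟩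
    rintro y ⟨hyS, hyd⟩
    rw [dist1_eq_one_iff] at hyd
    rcases hyd with rfl|rfl|rfl|rfl|rfl|rfl <;>
      first
        | rfl
        | exact absurd (m2.1 hyS) k2
        | exact absurd (m3.1 hyS) k3
        | exact absurd (m4.1 hyS) k4
        | exact absurd (m5.1 hyS) k5
        | exact absurd (m6.1 hyS) k6
  · refine ⟨(a-1, b, c), ⟨m2.2 k2, (dist1_eq_one_iff _ _).2 (Or.inr (Or.inl rfl))⟩, ?_⟩
    rintro y ⟨hyS, hyd⟩
    rw [dist1_eq_one_iff] at hyd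
    rcases hyd with rfl|rfl|rfl|rfl|rfl|rfl <;>
      first
        | rfl
        | exact absurd (m1.1 hyS) k1
        | exact absurd (m3.1 hyS) k3
        | exact absurd (m4.1 hyS) k4
        | exact absurd (m5.1 hyS) k5
        | exact absurd (m6.1 hyS) k6
  · refine ⟨(a, b+1, c), ⟨m3.2 k3, (dist1_eq_one_iff _ _).2 (Or.inr (Or.inr (Or.inl rfl)))⟩, ?_⟩
    rintro y ⟨hyS, hyd⟩
    rw [dist1_eq_one_iff] at hyd
    rcases hyd with rfl|rfl|rfl|rfl|rfl|rfl <;>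
      first
        | rfl
        | exact absurd (m1.1 hyS) k1
        | exact absurd (m2.1 hyS) k2
        | exact absurd (m4.1 hyS) k4
        | exact absurd (m5.1 hyS) k5
        | exact absurd (m6.1 hyS) k6
  · refine ⟨(a, b-1, c), ⟨m4.2 k4, (dist1_eq_one_iff _ _).2 (Or.inr (Or.inr (Or.inr (Or.inl rfl))))⟩, ?_⟩
    rintro y ⟨hyS, hyd⟩
    rw [dist1_eq_one_iff] at hyd
    rcases hyd with rfl|rfl|rfl|rfl|rfl|rfl <;>
      first
        | rfl
        | exact absurd (m1.1 hyS) k1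
        | exact absurd (m2.1 hyS) k2
        | exact absurd (m3.1 hyS) k3
        | exact absurd (m5.1 hyS) k5
        | exact absurd (m6.1 hyS) k6
  · refine ⟨(a, b, c+1), ⟨m5.2 k5, (dist1_eq_one_iff _ _).2 (Or.inr (Or.inr (Or.inr (Or.inr (Or.inl rfl)))))⟩, ?_⟩
    rintro y ⟨hyS, hyd⟩
    rw [dist1_eq_one_iff] at hyd
    rcases hyd with rfl|rfl|rfl|rfl|rfl|rfl <;>
      first
        | rfl
        | exact absurd (m1.1 hyS) k1
        | exact absurd (m2.1 hyS) k2
        | exact absurd (m3.1 hyS) k3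
        | exact absurd (m4.1 hyS) k4
        | exact absurd (m6.1 hyS) k6
  · refine ⟨(a, b, c-1), ⟨m6.2 k6, (dist1_eq_one_iff _ _).2 (Or.inr (Or.inr (Or.inr (Or.inr (Or.inr rfl)))))⟩, ?_⟩
    rintro y ⟨hyS, hyd⟩
    rw [dist1_eq_one_iff] at hyd
    rcases hyd with rfl|rfl|rfl|rfl|rfl|rfl <;>
      first
        | rfl
        | exact absurd (m1.1 hyS) k1
        | exact absurd (m2.1 hyS) k2
        | exact absurd (m3.1 hyS) k3
        | exact absurd (m4.1 hyS) k4
        | exact absurd (m5.1 hyS) k5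
end

section
/- Let \(\Theta\) be a finite induced subgraph of the unit distance graph of \(\mathbb{Z}^n\) that arises as an induced component of some perfect dominating set. Then \(\Theta\) is isomorphic to a Cartesian product of paths \(P_{i_1} \square P_{i_2} \square \cdots \square P_{i_n}\) with each \(i_k \ge 1\). -/
def distL (n : ℕ) (u v : Fin n → ℤ) : ℤ := ∑ i, |u i - v i|

def ΛL (n : ℕ) : SimpleGraph (Fin n → ℤ) where
  Adj u v := distL n u v = 1
  symm := by
    constructor
    intro u v h
    simpa [distL, abs_sub_comm] using h
  loopless := by
    constructor
    intro u h
    simp [distL] at h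

def IsPDSn (n : ℕ) (S : Set (Fin n → ℤ)) : Prop :=
  ∀ v ∉ S, ∃! w, w ∈ S ∧ distL n v w = 1

def compn (n : ℕ) (S : Set (Fin n → ℤ)) (v : Fin n → ℤ) : Set (Fin n → ℤ) :=
  {w | ∃ (hv : v ∈ S) (hw : w ∈ S), ((ΛL n).induce S).Reachable ⟨v, hv⟩ ⟨w, hw⟩}

/-- The Cartesian product of paths `P_{i 0} □ ⋯ □ P_{i (n-1)}`. -/
def pathsProduct (n : ℕ) (i : Fin n → ℕ) : SimpleGraph (∀ k, Fin (i k)) where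
  Adj a b := (∑ k, |((a k : ℤ)) - ((b k : ℤ))|) = 1
  symm := by
    constructor
    intro a b h
    simpa [abs_sub_comm] using h
  loopless := by
    constructor
    intro a h
    simp at h

/-! ### Auxiliary lemmas -/

lemma sum_abs_eq_one {n : ℕ} {f : Fin n → ℤ} (h : ∑ i, |f i| = 1) :
    ∃ j, |f j| = 1 ∧ ∀ k, k ≠ j → f k = 0 := by
  have hne : ∃ j, f j ≠ 0 := by
    by_contra hc
    push_neg at hc
    simp [hc] at h
  obtain ⟨j, hj⟩ := hne
  have hsplit : |f j| + ∑ k ∈ Finset.univ.erase j, |f k| = 1 := by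
    rw [Finset.add_sum_erase _ (fun k => |f k|) (Finset.mem_univ j)]
    exact h
  have hnonneg : ∀ k ∈ Finset.univ.erase j, 0 ≤ |f k| := fun k _ => abs_nonneg _
  have hjpos : 1 ≤ |f j| := by
    rcases (abs_pos.mpr hj) with h'
    omega
  have hsum0 : ∑ k ∈ Finset.univ.erase j, |f k| = 0 := by
    have := Finset.sum_nonneg hnonneg
    omega
  refine ⟨j, by omega, fun k hk => ?_⟩
  have := (Finset.sum_eq_zero_iff_of_nonneg hnonneg).mp hsum0 k (by simp [hk])
  exact abs_eq_zero.mp this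

/-- `distL = 1` means: differ in exactly one coordinate, by `±1`. -/
lemma distL_one_iff {n : ℕ} {u w : Fin n → ℤ} :
    distL n u w = 1 ↔ ∃ j, |u j - w j| = 1 ∧ ∀ k, k ≠ j → u k = w k := by
  constructor
  · intro h
    obtain ⟨j, h1, h2⟩ := sum_abs_eq_one (f := fun i => u i - w i) h
    exact ⟨j, h1, fun k hk => by have := h2 k hk; omega⟩
  · rintro ⟨j, h1, h2⟩
    have h0 : distL n u w = ∑ i, |u i - w i| := rfl
    rw [h0, Finset.sum_eq_single j]
    · exact h1
    · intro k _ hk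
      have := h2 k hk
      simp [this]
    · simp

/-- The box spanned by two points. -/
def inBox {n : ℕ} (a b z : Fin n → ℤ) : Prop :=
  ∀ k, min (a k) (b k) ≤ z k ∧ z k ≤ max (a k) (b k)

/-- Square-closedness. -/
def SqClosed {n : ℕ} (C : Set (Fin n → ℤ)) : Prop :=
  ∀ (x : Fin n → ℤ) (i j : Fin n), i ≠ j → ∀ (ε δ : ℤ), |ε| = 1 → |δ| = 1 →
    Function.update x i (x i + ε) ∈ C → Function.update x j (x j + δ) ∈ C →
    Function.update (Function.update x i (x i + ε)) j (x j + δ) ∈ C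

lemma compn_mem_adj {n : ℕ} {S : Set (Fin n → ℤ)} {v w w' : Fin n → ℤ}
    (hw : w ∈ compn n S v) (hw' : w' ∈ S) (hadj : distL n w w' = 1) :
    w' ∈ compn n S v := by
  obtain ⟨hv, hwS, hr⟩ := hw
  refine ⟨hv, hw', hr.trans (SimpleGraph.Adj.reachable ?_)⟩
  show (ΛL n).Adj w w'
  exact hadj

lemma compn_sqClosed {n : ℕ} {S : Set (Fin n → ℤ)} (hS : IsPDSn n S) (v : Fin n → ℤ) :
    SqClosed (compn n S v) := by
  intro x i j hij ε δ hε hδ h1 h2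
  set p1 := Function.update x i (x i + ε) with hp1
  set p2 := Function.update x j (x j + δ) with hp2
  set q := Function.update p1 j (x j + δ) with hq
  have hp1j : p1 j = x j := Function.update_of_ne (Ne.symm hij) _ _
  have hp1i : p1 i = x i + ε := Function.update_self _ _ _
  have hqj : q j = x j + δ := Function.update_self _ _ _
  have hqi : q i = x i + ε := by
    rw [hq, Function.update_of_ne hij, hp1i]
  have hd1 : distL n q p1 = 1 := by
    rw [distL_one_iff]
    refine ⟨j, by rw [hqj, hp1j]; simpa using hδ, fun k hk => ?_⟩
    rw [hq, Function.update_of_ne hk]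
  have hd2 : distL n q p2 = 1 := by
    rw [distL_one_iff]
    refine ⟨i, by rw [hqi, hp2, Function.update_of_ne hij]; simpa using hε, fun k hk => ?_⟩
    by_cases hkj : k = j
    · rw [hkj, hqj, hp2, Function.update_self]
    · rw [hq, Function.update_of_ne hkj, hp1, Function.update_of_ne hk,
        hp2, Function.update_of_ne hkj]
  have hqS : q ∈ S := by
    by_contra hqS
    obtain ⟨w, _, huniq⟩ := hS q hqS
    have e1 : p1 = w := huniq p1 ⟨(h1 : p1 ∈ compn n S v).2.1, hd1⟩
    have e2 : p2 = w := huniq p2 ⟨(h2 : p2 ∈ compn n S v).2.1, hd2⟩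
    have : p1 i = p2 i := by rw [e1, e2]
    rw [hp1i, hp2, Function.update_of_ne hij] at this
    have hε' : ε = 1 ∨ ε = -1 := (abs_eq (by norm_num)).mp hε
    omega
  refine compn_mem_adj h1 hqS ?_
  rw [distL_one_iff]
  refine ⟨j, by rw [hp1j, hqj]; simpa [abs_sub_comm] using hδ, fun k hk => ?_⟩
  rw [hq, Function.update_of_ne hk]

lemma liftLemma {n : ℕ} {C : Set (Fin n → ℤ)} (hC : SqClosed C)
    {u : Fin n → ℤ} {j : Fin n} {ε : ℤ} (hε : |ε| = 1)
    (hu' : Function.update u j (u j + ε) ∈ C)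
    {w : Fin n → ℤ} (hwj : w j = u j)
    (hbox : ∀ z, inBox u w z → z ∈ C) :
    Function.update w j (w j + ε) ∈ C := by
  suffices H : ∀ N (w : Fin n → ℤ), (∑ k, (w k - u k).natAbs) = N → w j = u j →
      (∀ z, inBox u w z → z ∈ C) → Function.update w j (w j + ε) ∈ C from
    H _ w rfl hwj hbox
  intro N
  induction N using Nat.strong_induction_on with
  | _ N IH =>
    intro w hN hwj hbox
    by_cases hwu : w = u
    · subst hwu; exact hu'
    · have hex : ∃ k, w k ≠ u k := by
        by_contra hc
        push_neg at hc
        exact hwu (funext hc)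
      obtain ⟨k, hk⟩ := hex
      have hkj : k ≠ j := fun h => hk (by rw [h]; exact hwj)
      set d : ℤ := if u k < w k then 1 else -1 with hd
      set w' := Function.update w k (w k - d) with hw'
      have hw'k : w' k = w k - d := Function.update_self _ _ _
      have hw'ne : ∀ m, m ≠ k → w' m = w m := fun m hm => Function.update_of_ne hm _ _
      have hw'box : inBox u w w' := by
        intro m
        by_cases hm : m = k
        · subst hm
          rw [hw'k]
          constructor <;> [skip; skip] <;> (simp only [hd]; split <;> omega)
        · rw [hw'ne m hm]; omega
      have hw'C : C w' := hbox w' hw'box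
      have hboxw' : ∀ z, inBox u w' z → z ∈ C := by
        intro z hz
        refine hbox z (fun m => ?_)
        have h1 := hw'box m
        have h2 := hz m
        omega
      have hw'j : w' j = u j := by rw [hw'ne j (Ne.symm hkj)]; exact hwj
      have hNdec : (∑ m, (w' m - u m).natAbs) < N := by
        rw [← hN, ← Finset.add_sum_erase _ (fun m => (w' m - u m).natAbs) (Finset.mem_univ k),
          ← Finset.add_sum_erase _ (fun m => (w m - u m).natAbs) (Finset.mem_univ k)]
        have he : ∑ m ∈ Finset.univ.erase k, (w' m - u m).natAbs
            = ∑ m ∈ Finset.univ.erase k, (w m - u m).natAbs := by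
          refine Finset.sum_congr rfl fun m hm => ?_
          rw [hw'ne m (Finset.ne_of_mem_erase hm)]
        rw [he]
        have : (w' k - u k).natAbs < (w k - u k).natAbs := by
          rw [hw'k]; simp only [hd]; split <;> omega
        omega
      have hlift' := IH _ hNdec w' rfl hw'j hboxw'
      have hdabs : |d| = 1 := by simp only [hd]; split <;> norm_num
      have hw_eq : Function.update w' k (w' k + d) = w := by
        funext m
        by_cases hm : m = k
        · subst hm; rw [Function.update_self, hw'k]; ring
        · rw [Function.update_of_ne hm, hw'ne m hm]
      have hwC : w ∈ C := hbox w (fun m => by omega)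
      have hsq := hC w' j k (Ne.symm hkj) ε d hε hdabs hlift' (by rw [hw_eq]; exact hwC)
      have hfinal : Function.update (Function.update w' j (w' j + ε)) k (w' k + d)
          = Function.update w j (w j + ε) := by
        funext m
        by_cases hm : m = k
        · subst hm
          rw [Function.update_self, Function.update_of_ne hkj, hw'k]; ring
        · rw [Function.update_of_ne hm]
          by_cases hmj : m = j
          · rw [hmj, Function.update_self, Function.update_self, hw'ne j (Ne.symm hkj)]
          · rw [Function.update_of_ne hmj, Function.update_of_ne hmj, hw'ne m hm]
      rw [← hfinal]
      exact hsq

lemma stepLemma {n : ℕ} {C : Set (Fin n → ℤ)} (hC : SqClosed C)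
    {x₀ x x' : Fin n → ℤ} (hx' : x' ∈ C)
    (hadj : distL n x x' = 1)
    (hbox : ∀ z, inBox x₀ x z → z ∈ C) :
    ∀ z, inBox x₀ x' z → z ∈ C := by
  obtain ⟨j, hj1, hj2⟩ := distL_one_iff.mp hadj
  have hj1' : x j - x' j = 1 ∨ x j - x' j = -1 := (abs_eq (by norm_num)).mp hj1
  intro z hz
  by_cases hA : min (x₀ j) (x j) ≤ z j ∧ z j ≤ max (x₀ j) (x j)
  · refine hbox z (fun k => ?_)
    by_cases hk : k = j
    · rw [hk]; exact hA
    · have := hz k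
      have := hj2 k hk
      omega
  · have hzj : z j = x' j := by
      have := hz j
      omega
    set ε : ℤ := x' j - x j with hε
    have hεabs : |ε| = 1 := by rw [hε, abs_sub_comm]; exact hj1
    set w := Function.update z j (x j) with hw
    have hwj : w j = x j := Function.update_self _ _ _
    have hwne : ∀ m, m ≠ j → w m = z m := fun m hm => Function.update_of_ne hm _ _
    have hwbox : inBox x₀ x w := by
      intro m
      by_cases hm : m = j
      · rw [hm, hwj]; omega
      · rw [hwne m hm]
        have := hz m
        have := hj2 m hm
        omega
    have hu' : Function.update x j (x j + ε) ∈ C := by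
      have heq : Function.update x j (x j + ε) = x' := by
        funext m
        by_cases hm : m = j
        · rw [hm, Function.update_self]; omega
        · rw [Function.update_of_ne hm]; exact hj2 m hm
      rw [heq]; exact hx'
    have hbox' : ∀ y, inBox x w y → y ∈ C := by
      intro y hy
      refine hbox y (fun m => ?_)
      have h1 := hy m
      have h2 := hwbox m
      have h3 : min (x₀ m) (x m) ≤ x m ∧ x m ≤ max (x₀ m) (x m) := by omega
      omega
    have hlift := liftLemma hC hεabs hu' hwj hbox'
    have heq2 : Function.update w j (w j + ε) = z := by
      funext m
      by_cases hm : m = j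
      · rw [hm, Function.update_self, hwj]; omega
      · rw [Function.update_of_ne hm]; exact hwne m hm
    rw [← heq2]; exact hlift

lemma pairBox {n : ℕ} {S : Set (Fin n → ℤ)} (hS : IsPDSn n S) {v : Fin n → ℤ}
    {x y : Fin n → ℤ} (hx : x ∈ compn n S v) (hy : y ∈ compn n S v) :
    ∀ z, inBox x y z → z ∈ compn n S v := by
  have hsq := compn_sqClosed hS v
  obtain ⟨hvS, hxS, hrx⟩ := hx
  obtain ⟨hvS2, hyS, hry⟩ := hy
  have hxC : x ∈ compn n S v := ⟨hvS, hxS, hrx⟩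
  have hr : ((ΛL n).induce S).Reachable ⟨x, hxS⟩ ⟨y, hyS⟩ := hrx.symm.trans hry
  obtain ⟨p⟩ := hr
  have H : ∀ (a b : S) (_ : ((ΛL n).induce S).Walk a b), a.1 ∈ compn n S v →
      (∀ z, inBox x a.1 z → z ∈ compn n S v) → ∀ z, inBox x b.1 z → z ∈ compn n S v := by
    intro a b p
    induction p with
    | nil => intro h1 h2; exact h2
    | @cons a1 c1 b1 h p ih =>
      intro h1 h2
      have hadj : distL n a1.1 c1.1 = 1 := h
      have hcC : c1.1 ∈ compn n S v := compn_mem_adj h1 c1.2 hadj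
      exact ih hcC (stepLemma hsq hcC hadj h2)
  refine H ⟨x, hxS⟩ ⟨y, hyS⟩ p hxC (fun z hz => ?_)
  have hz' : inBox x x z := hz
  have hzx : z = x := funext fun k => by have := hz' k; omega
  rw [hzx]; exact hxC

lemma intervalLemma {n : ℕ} {S : Set (Fin n → ℤ)} {v : Fin n → ℤ}
    {x y : Fin n → ℤ} (hx : x ∈ compn n S v) (hy : y ∈ compn n S v)
    (k : Fin n) {c : ℤ} (h1 : min (x k) (y k) ≤ c) (h2 : c ≤ max (x k) (y k)) :
    ∃ w ∈ compn n S v, w k = c := by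
  obtain ⟨hvS, hxS, hrx⟩ := hx
  obtain ⟨hvS2, hyS, hry⟩ := hy
  have hxC : x ∈ compn n S v := ⟨hvS, hxS, hrx⟩
  have hr : ((ΛL n).induce S).Reachable ⟨x, hxS⟩ ⟨y, hyS⟩ := hrx.symm.trans hry
  obtain ⟨p⟩ := hr
  have H : ∀ (a b : S) (_ : ((ΛL n).induce S).Walk a b), a.1 ∈ compn n S v →
      ∀ c : ℤ, min (a.1 k) (b.1 k) ≤ c → c ≤ max (a.1 k) (b.1 k) →
      ∃ w ∈ compn n S v, w k = c := by
    intro a b p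
    induction p with
    | nil =>
      intro h1 c hc1 hc2
      exact ⟨_, h1, by omega⟩
    | @cons a1 c1 b1 h p ih =>
      intro h1 c hc1 hc2
      have hadj : distL n a1.1 c1.1 = 1 := h
      have hc1C : c1.1 ∈ compn n S v := compn_mem_adj h1 c1.2 hadj
      have hdist : |a1.1 k - c1.1 k| ≤ 1 := by
        obtain ⟨j, hj1, hj2⟩ := distL_one_iff.mp hadj
        by_cases hkj : k = j
        · rw [hkj]; omega
        · rw [hj2 k hkj]; simp
      have hdist' : -1 ≤ a1.1 k - c1.1 k ∧ a1.1 k - c1.1 k ≤ 1 := abs_le.mp hdist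
      by_cases hB : min (c1.1 k) (b1.1 k) ≤ c ∧ c ≤ max (c1.1 k) (b1.1 k)
      · exact ih hc1C c hB.1 hB.2
      · refine ⟨a1.1, h1, ?_⟩
        omega
  exact H ⟨x, hxS⟩ ⟨y, hyS⟩ p hxC c h1 h2

theorem stmt10 (n : ℕ) (S : Set (Fin n → ℤ)) (hS : IsPDSn n S)
    (v : Fin n → ℤ) (hv : v ∈ S) (hfin : (compn n S v).Finite) :
    ∃ i : Fin n → ℕ, (∀ k, 1 ≤ i k) ∧
      Nonempty ((ΛL n).induce (compn n S v) ≃g pathsProduct n i) := by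
  classical
  set C := compn n S v with hC
  have hvC : v ∈ C := ⟨hv, hv, SimpleGraph.Reachable.refl _⟩
  have key : ∀ k : Fin n, ∃ m M : ℤ, (∀ x ∈ C, m ≤ x k ∧ x k ≤ M) ∧
      (∃ x ∈ C, x k = m) ∧ (∃ x ∈ C, x k = M) := by
    intro k
    have hvT : v ∈ hfin.toFinset := hfin.mem_toFinset.mpr hvC
    have htne : (hfin.toFinset.image (fun x => x k)).Nonempty :=
      ⟨v k, Finset.mem_image_of_mem _ hvT⟩
    refine ⟨(hfin.toFinset.image (fun x => x k)).min' htne,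
      (hfin.toFinset.image (fun x => x k)).max' htne, fun x hx => ⟨?_, ?_⟩, ?_, ?_⟩
    · exact Finset.min'_le _ _ (Finset.mem_image_of_mem (fun x => x k) (hfin.mem_toFinset.mpr hx))
    · exact Finset.le_max' _ _ (Finset.mem_image_of_mem (fun x => x k) (hfin.mem_toFinset.mpr hx))
    · obtain ⟨x, hx, hxk⟩ :=
        Finset.mem_image.mp ((hfin.toFinset.image (fun x => x k)).min'_mem htne)
      exact ⟨x, hfin.mem_toFinset.mp hx, hxk⟩
    · obtain ⟨x, hx, hxk⟩ :=
        Finset.mem_image.mp ((hfin.toFinset.image (fun x => x k)).max'_mem htne)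
      exact ⟨x, hfin.mem_toFinset.mp hx, hxk⟩
  choose a b hbounds hattain_min hattain_max using key
  -- every coordinate value in [a k, b k] is attained
  have hcoord : ∀ (k : Fin n) (c : ℤ), a k ≤ c → c ≤ b k → ∃ w ∈ C, w k = c := by
    intro k c hc1 hc2
    obtain ⟨xm, hxm, hxmk⟩ := hattain_min k
    obtain ⟨xM, hxM, hxMk⟩ := hattain_max k
    exact intervalLemma hxm hxM k (by omega) (by omega)
  -- the box is contained in C
  have hboxC : ∀ z : Fin n → ℤ, (∀ k, a k ≤ z k ∧ z k ≤ b k) → z ∈ C := by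
    intro z hz
    have H : ∀ m : ℕ, m ≤ n → ∃ w ∈ C, ∀ k : Fin n, (k : ℕ) < m → w k = z k := by
      intro m
      induction m with
      | zero => intro _; exact ⟨v, hvC, fun k hk => absurd hk (by omega)⟩
      | succ m ihm =>
        intro hm
        obtain ⟨w, hwC, hwk⟩ := ihm (by omega)
        have hmn : m < n := by omega
        set km : Fin n := ⟨m, hmn⟩ with hkm
        obtain ⟨y, hyC, hyk⟩ := hcoord km (z km) (hz km).1 (hz km).2
        set w' := Function.update w km (z km) with hw'
        have hw'C : w' ∈ C := by
          refine pairBox hS hwC hyC w' (fun k => ?_)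
          by_cases hk : k = km
          · rw [hk, hw', Function.update_self]
            rw [← hyk]
            omega
          · rw [hw', Function.update_of_ne hk]
            omega
        refine ⟨w', hw'C, fun k hk => ?_⟩
        by_cases hkk : k = km
        · rw [hkk, hw', Function.update_self]
        · have : (k : ℕ) < m := by
            rcases Nat.lt_succ_iff_lt_or_eq.mp hk with h | h
            · exact h
            · exact absurd (Fin.ext h : k = km) hkk
          rw [hw', Function.update_of_ne hkk]
          exact hwk k this
    obtain ⟨w, hwC, hwk⟩ := H n le_rfl
    have : w = z := funext fun k => hwk k k.isLt
    rw [← this]; exact hwC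
  have hCbox : ∀ z : Fin n → ℤ, z ∈ C ↔ (∀ k, a k ≤ z k ∧ z k ≤ b k) := by
    intro z
    exact ⟨fun hz k => hbounds k z hz, hboxC z⟩
  have hab : ∀ k, a k ≤ b k := fun k => by
    have := hbounds k v hvC; omega
  refine ⟨fun k => (b k - a k + 1).toNat, fun k => by have := hab k; show 1 ≤ (b k - a k + 1).toNat; omega, ?_⟩
  set i : Fin n → ℕ := fun k => (b k - a k + 1).toNat with hi
  have hicast : ∀ k, (i k : ℤ) = b k - a k + 1 := fun k => by
    simp only [hi]
    rw [Int.toNat_of_nonneg (by have := hab k; omega)]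
  have htoFun : ∀ (x : {z // z ∈ C}) (k : Fin n), (x.1 k - a k).toNat < i k := by
    intro x k
    have hx := (hCbox x.1).mp x.2 k
    have := hicast k
    omega
  have hinv : ∀ (f : ∀ k, Fin (i k)), (fun k => a k + ((f k : ℕ) : ℤ)) ∈ C := by
    intro f
    refine (hCbox _).mpr (fun k => ?_)
    have h1 : (f k : ℕ) < i k := (f k).isLt
    have h2 := hicast k
    constructor <;> omega
  let e : {z // z ∈ C} ≃ (∀ k, Fin (i k)) :=
    { toFun := fun x k => ⟨(x.1 k - a k).toNat, htoFun x k⟩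
      invFun := fun f => ⟨fun k => a k + ((f k : ℕ) : ℤ), hinv f⟩
      left_inv := by
        intro x
        apply Subtype.ext
        funext k
        have hx := (hCbox x.1).mp x.2 k
        show a k + ((x.1 k - a k).toNat : ℤ) = x.1 k
        omega
      right_inv := by
        intro f
        funext k
        apply Fin.ext
        show (a k + ((f k : ℕ) : ℤ) - a k).toNat = (f k : ℕ)
        omega }
  refine ⟨⟨e, ?_⟩⟩
  intro x y
  show (∑ k, |(((e x) k : ℤ)) - (((e y) k : ℤ))|) = 1 ↔ ((ΛL n).induce C).Adj x y
  have hterm : ∀ k, |(((e x) k : ℤ)) - (((e y) k : ℤ))| = |x.1 k - y.1 k| := by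
    intro k
    have hx := (hCbox x.1).mp x.2 k
    have hy := (hCbox y.1).mp y.2 k
    show |((x.1 k - a k).toNat : ℤ) - ((y.1 k - a k).toNat : ℤ)| = |x.1 k - y.1 k|
    rw [Int.toNat_of_nonneg (by omega), Int.toNat_of_nonneg (by omega)]
    congr 1
    ring
  rw [Finset.sum_congr rfl (fun k _ => hterm k)]
  show (∑ k, |x.1 k - y.1 k|) = 1 ↔ (ΛL n).Adj x.1 y.1
  exact Iff.rfl
end

section
/- For the homomorphism \(\Phi : \mathbb{Z}^3 \to \mathbb{Z}_{20}\), \(\Phi(a,b,c) = 2a + 5b + 6c \bmod 20\), the images of the 20 points of \(V^* = \{v : d(v,V) \le 1\}\) with \(V = \{(0,0,0),(1,0,0),(0,1,0),(1,1,0)\}\) are exactly the 20 residues \(\{0,1,2,\ldots,19\}\), each occurring exactly once. -/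
def Lstar : List (ℤ × ℤ × ℤ) :=
  [(0,0,0),(1,0,0),(0,1,0),(1,1,0),(0,0,1),(1,0,1),(0,1,1),(1,1,1),
   (0,0,-1),(1,0,-1),(0,1,-1),(1,1,-1),(-1,0,0),(-1,1,0),(2,0,0),(2,1,0),
   (0,-1,0),(1,-1,0),(0,2,0),(1,2,0)]

set_option maxHeartbeats 1000000 in
lemma Vstar_eq_s16 : Vstar = {p | p ∈ Lstar} := by
  ext ⟨a, b, c⟩
  constructor
  · rintro ⟨⟨x, y, z⟩, hw, hd⟩
    simp only [dist1] at hd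
    have key : (a = x - 1 ∧ b = y ∧ c = z) ∨ (a = x + 1 ∧ b = y ∧ c = z) ∨
        (a = x ∧ b = y - 1 ∧ c = z) ∨ (a = x ∧ b = y + 1 ∧ c = z) ∨
        (a = x ∧ b = y ∧ c = z - 1) ∨ (a = x ∧ b = y ∧ c = z + 1) ∨
        (a = x ∧ b = y ∧ c = z) := by
      have p1 := le_abs_self (a-x); have q1 := neg_abs_le (a-x)
      have p2 := le_abs_self (b-y); have q2 := neg_abs_le (b-y)
      have p3 := le_abs_self (c-z); have q3 := neg_abs_le (c-z)
      have n1 := abs_nonneg (a-x); have n2 := abs_nonneg (b-y); have n3 := abs_nonneg (c-z)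
      omega
    simp only [Vsq, Set.mem_insert_iff, Set.mem_singleton_iff, Prod.mk.injEq] at hw
    show (a, b, c) ∈ Lstar
    rcases hw with ⟨rfl,rfl,rfl⟩|⟨rfl,rfl,rfl⟩|⟨rfl,rfl,rfl⟩|⟨rfl,rfl,rfl⟩ <;>
      rcases key with ⟨rfl,rfl,rfl⟩|⟨rfl,rfl,rfl⟩|⟨rfl,rfl,rfl⟩|⟨rfl,rfl,rfl⟩|⟨rfl,rfl,rfl⟩|⟨rfl,rfl,rfl⟩|⟨rfl,rfl,rfl⟩ <;>
      decide
  · intro h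
    replace h : (a, b, c) ∈ Lstar := h
    have helper : ∀ p ∈ Lstar, ∃ w ∈ ([(0,0,0),(1,0,0),(0,1,0),(1,1,0)] : List (ℤ × ℤ × ℤ)),
        dist1 p w ≤ 1 := by decide
    obtain ⟨w, hw, hd⟩ := helper _ h
    refine ⟨w, ?_, hd⟩
    fin_cases hw <;> simp [Vsq]

set_option maxHeartbeats 1000000 in
lemma inj_aux : ∀ p ∈ Lstar, ∀ q ∈ Lstar,
    (2 * (p.1 : ZMod 20) + 5 * p.2.1 + 6 * p.2.2) =
      (2 * (q.1 : ZMod 20) + 5 * q.2.1 + 6 * q.2.2) → p = q := by decide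

set_option maxHeartbeats 1000000 in
lemma surj_aux : ∀ x : ZMod 20, ∃ p ∈ Lstar,
    (2 * (p.1 : ZMod 20) + 5 * p.2.1 + 6 * p.2.2) = x := by decide

theorem stmt16 :
    Set.BijOn (fun v : ℤ × ℤ × ℤ => (2 * v.1 + 5 * v.2.1 + 6 * v.2.2 : ZMod 20))
      Vstar Set.univ := by
  refine ⟨fun v _ => Set.mem_univ _, ?_, ?_⟩
  · intro p hp q hq h
    rw [Vstar_eq_s16] at hp hq
    exact inj_aux p hp q hq h
  · intro x _
    obtain ⟨p, hp, hfp⟩ := surj_aux x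
    exact ⟨p, by rw [Vstar_eq_s16]; exact hp, hfp⟩
end
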